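/- For profiles over exactly 3 alternatives, a Condorcet winner is never socially disappointing: if alternative a is the unique winner of Condorcet's method at a profile, then a is ranked last by strictly fewer than half of the voters. -/

import Mathlib

open Finset

attribute [local instance] Classical.propDecidable

noncomputable section

/-- A preference profile for `n` voters: each voter has a ballot, a list of
alternatives ordered from most preferred (head) to least preferred (last). -/
abbrev Profile (n : ℕ) (A : Type*) := Fin n → List A

variable {A : Type*} [DecidableEq A]

/-- A valid profile: every ballot is a strict linear order on the alternatives,
i.e. a duplicate-free list containing every alternative. -/
def IsProfile {n : ℕ} (P : Profile n A) : Prop :=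
  ∀ i, (P i).Nodup ∧ ∀ a : A, a ∈ P i

/-- The voter with ballot `l` prefers `x` to `y`. -/
def Prefers (l : List A) (x y : A) : Prop := l.idxOf x < l.idxOf y

/-- The number of voters who rank `a` last (at the bottom of their list). -/
def lastCount {n : ℕ} (P : Profile n A) (a : A) : ℕ :=
  (univ.filter fun i => (P i).getLast? = some a).card

/-- The number of voters who rank `a` first (at the top of their list). -/
def firstCount {n : ℕ} (P : Profile n A) (a : A) : ℕ :=
  (univ.filter fun i => (P i).head? = some a).card

/-- The number of voters preferring `x` to `y`. -/
def prefCount {n : ℕ} (P : Profile n A) (x y : A) : ℕ :=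
  (univ.filter fun i => Prefers (P i) x y).card

/-- `x` defeats `y` in a pairwise majority contest: strictly more voters
prefer `x` to `y` than prefer `y` to `x`. -/
def Defeats {n : ℕ} (P : Profile n A) (x y : A) : Prop :=
  prefCount P y x < prefCount P x y

/-- Condorcet's method: the winners are the alternatives defeated by no other alternative. -/
def CondorcetWinners {n : ℕ} (P : Profile n A) : Set A :=
  {a | ∀ b, ¬ Defeats P b a}

/-- `a` is a Condorcet winner: it is the unique winner of Condorcet's method. -/
def IsCondorcetWinner {n : ℕ} (P : Profile n A) (a : A) : Prop :=
  CondorcetWinners P = {a}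

/-- If `a` is last on a nodup complete ballot and `b ≠ a` is in it, the voter prefers `b`. -/
lemma prefers_of_last {l : List A} (hnd : l.Nodup) {a b : A} (hb : b ∈ l) (hba : b ≠ a)
    (h : l.getLast? = some a) : Prefers l b a := by
  obtain ⟨ys, rfl⟩ := List.getLast?_eq_some_iff.mp h
  have ha : List.idxOf a (ys ++ [a]) = ys.length := by
    have hna : a ∉ ys := by
      have := List.disjoint_of_nodup_append hnd
      intro hmem; exact this hmem (by simp)
    rw [List.idxOf_append_of_notMem hna]; simp
  have hblt : List.idxOf b (ys ++ [a]) < (ys ++ [a]).length :=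
    List.idxOf_lt_length_iff.mpr hb
  have hne : List.idxOf b (ys ++ [a]) ≠ List.idxOf a (ys ++ [a]) := by
    intro hEq
    exact hba ((List.idxOf_inj hb).mp hEq)
  simp only [List.length_append, List.length_singleton] at hblt
  unfold Prefers
  omega

lemma not_prefers_iff {n : ℕ} (P : Profile n A) (hP : IsProfile P) {x y : A} (hxy : x ≠ y)
    (i : Fin n) : ¬ Prefers (P i) x y ↔ Prefers (P i) y x := by
  obtain ⟨hnd, hmem⟩ := hP i
  have hne : List.idxOf x (P i) ≠ List.idxOf y (P i) := fun hEq =>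
    hxy ((List.idxOf_inj (hmem x)).mp hEq)
  unfold Prefers
  omega

lemma prefCount_add {n : ℕ} (P : Profile n A) (hP : IsProfile P) {x y : A} (hxy : x ≠ y) :
    prefCount P x y + prefCount P y x = n := by
  classical
  unfold prefCount
  have : (univ.filter fun i => Prefers (P i) y x)
      = (univ.filter fun i => ¬ Prefers (P i) x y) := by
    apply Finset.filter_congr
    intro i _
    simp [not_prefers_iff P hP hxy i]
  rw [this, Finset.card_filter_add_card_filter_not, Finset.card_univ, Fintype.card_fin]

theorem condorcet_winner_not_disappointing {A : Type*} [Fintype A] [DecidableEq A]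
    (hA : Fintype.card A = 3) {n : ℕ} (P : Profile n A) (hP : IsProfile P)
    (a : A) (h : IsCondorcetWinner P a) : 2 * lastCount P a < n := by
  by_contra hcon
  push_neg at hcon
  have huniv : (Finset.univ : Finset A).card = 3 := by rw [Finset.card_univ, hA]
  obtain ⟨x, y, z, hxy, hxz, hyz, hU⟩ := Finset.card_eq_three.mp huniv
  have hall : ∀ w : A, w = x ∨ w = y ∨ w = z := by
    intro w
    have : w ∈ (Finset.univ : Finset A) := Finset.mem_univ w
    rw [hU] at this; simpa using this
  obtain ⟨b, c, hba, hca, hbc, hmem3⟩ :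
      ∃ b c : A, b ≠ a ∧ c ≠ a ∧ b ≠ c ∧ ∀ w : A, w = a ∨ w = b ∨ w = c := by
    rcases hall a with rfl | rfl | rfl
    · exact ⟨y, z, hxy.symm, hxz.symm, hyz, fun w => hall w⟩
    · exact ⟨x, z, hxy, hyz.symm, hxz, fun w =>
        (hall w).elim (Or.inr ∘ Or.inl) (·.elim Or.inl (Or.inr ∘ Or.inr))⟩
    · exact ⟨x, y, hxz, hyz, hxy, fun w =>
        (hall w).elim (Or.inr ∘ Or.inl) (·.elim (Or.inr ∘ Or.inr) Or.inl)⟩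
  have haw : a ∈ CondorcetWinners P := by rw [h]; rfl
  have key : ∀ d : A, d ≠ a → prefCount P a d = prefCount P d a := by
    intro d hda
    have hle : lastCount P a ≤ prefCount P d a := by
      apply Finset.card_le_card
      intro i hi
      simp only [Finset.mem_filter, Finset.mem_univ, true_and] at hi ⊢
      exact prefers_of_last (hP i).1 ((hP i).2 d) hda hi
    have hnd : ¬ Defeats P d a := haw d
    unfold Defeats at hnd
    have hsum := prefCount_add P hP hda
    omega
  have tie_b := key b hba
  have tie_c := key c hca
  have hwins : ∀ w : A, ¬ Defeats P w w := fun w => lt_irrefl _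
  rcases le_or_gt (prefCount P c b) (prefCount P b c) with hbc2 | hbc2
  · have hb : b ∈ CondorcetWinners P := by
      intro w
      rcases hmem3 w with rfl | rfl | rfl
      · unfold Defeats; omega
      · exact hwins _
      · unfold Defeats; omega
    rw [h] at hb
    exact hba hb
  · have hc : c ∈ CondorcetWinners P := by
      intro w
      rcases hmem3 w with rfl | rfl | rfl
      · unfold Defeats; omega
      · unfold Defeats; omega
      · exact hwins _
    rw [h] at hc
    exact hca hc
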